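/- arXiv:math/0610042 — 2 statements merged into one kernel-verified Lean document; each statement's English description precedes it below -/
import Mathlib

section
/- For any positive integer k, the double integral of 1/(x−y)² over x ∈ [−1,0] and y ∈ [k, k+1] equals ln(1 + 1/(k(k+2))). -/
lemma outer_int (c : ℝ) (hc : 1 ≤ c) :
    (∫ x in (-1:ℝ)..0, 1 / (x - c)) = Real.log (c / (1 + c)) := by
  have h := intervalIntegral.integral_comp_sub_right (a := (-1:ℝ)) (b := 0)
      (fun u : ℝ => 1 / u) c
  rw [h]
  rw [integral_one_div]
  · rw [show (0:ℝ) - c = -c by ring, show (-1:ℝ) - c = -(1 + c) by ring]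
    rw [neg_div_neg_eq]
  · intro h0
    rw [Set.mem_uIcc] at h0
    rcases h0 with ⟨h1, h2⟩ | ⟨h1, h2⟩ <;> linarith

theorem stmt_0 (k : ℕ) (hk : 0 < k) :
    ∫ x in (-1:ℝ)..0, ∫ y in (k:ℝ)..(k+1), 1 / (x - y)^2
      = Real.log (1 + 1 / ((k:ℝ) * (k + 2))) := by
  have hk1 : (1:ℝ) ≤ k := by exact_mod_cast hk
  have hinner : ∀ x ∈ Set.uIcc (-1:ℝ) 0,
      (∫ y in (k:ℝ)..(k+1), 1 / (x - y)^2)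
        = (fun x : ℝ => 1/(x-(k+1)) - 1/(x-(k:ℝ))) x := by
    intro x hx
    have hx0 : x ≤ 0 := by
      rcases Set.mem_uIcc.mp hx with h | h <;> linarith [h.1, h.2]
    have hne : ∀ y ∈ Set.uIcc (k:ℝ) (k+1), x - y ≠ 0 := by
      intro y hy
      have : (k:ℝ) ≤ y := by
        rcases Set.mem_uIcc.mp hy with h | h <;> linarith [h.1, h.2]
      intro h; nlinarith
    have key := intervalIntegral.integral_eq_sub_of_hasDerivAt
      (f := fun y : ℝ => 1/(x - y)) (f' := fun y : ℝ => 1/(x - y)^2)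
      (a := (k:ℝ)) (b := (k:ℝ)+1) ?_ ?_
    · simpa using key
    · intro y hy
      have h0 := hne y hy
      have hd : HasDerivAt (fun y : ℝ => x - y) (-1) y := by
        simpa using (hasDerivAt_id y).const_sub x
      have := hd.fun_inv h0
      simpa [one_div] using this
    · apply ContinuousOn.intervalIntegrable
      apply ContinuousOn.div continuousOn_const
      · exact (continuousOn_const.sub continuousOn_id).pow 2
      · intro y hy; exact pow_ne_zero 2 (hne y hy)
  rw [intervalIntegral.integral_congr hinner]
  have hintg : ∀ c : ℝ, 1 ≤ c →
      IntervalIntegrable (fun x : ℝ => 1 / (x - c)) MeasureTheory.volume (-1) 0 := by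
    intro c hc
    apply ContinuousOn.intervalIntegrable
    apply ContinuousOn.div continuousOn_const
    · exact continuousOn_id.sub continuousOn_const
    · intro x hx
      have : x ≤ 0 := by
        rcases Set.mem_uIcc.mp hx with h | h <;> linarith [h.1, h.2]
      intro h; linarith
  rw [intervalIntegral.integral_sub (hintg _ (by linarith)) (hintg _ hk1)]
  rw [outer_int _ (by linarith), outer_int _ hk1]
  rw [← Real.log_div (by positivity) (by positivity)]
  congr 1
  have h0 : (k:ℝ) ≠ 0 := by linarith
  field_simp
  ring
end

section
/- The function F(k) = ∫_{−1}^{0} ∫_{k}^{k+1} dx dy/(x−y)² satisfies F(k) = ln((k+1)²/(k(k+2))) for every positive integer k, and Σ_{k=1}^{∞} F(k) = ln 2. -/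
open intervalIntegral Real

-- inner integral
lemma inner_int (x : ℝ) (hx : x ≤ 0) (k : ℝ) (hk : 1 ≤ k) :
    ∫ y in k..(k+1), 1 / (x - y)^2 = 1/(x-(k+1)) - 1/(x-k) := by
  have hne : ∀ y ∈ Set.uIcc k (k+1), x - y ≠ 0 := by
    intro y hy
    rw [Set.uIcc_of_le (by linarith)] at hy
    have : 1 ≤ y := le_trans hk hy.1
    intro h; linarith [sub_eq_zero.mp h]
  have hderiv : ∀ y ∈ Set.uIcc k (k+1),
      HasDerivAt (fun y => (x - y)⁻¹) (1 / (x - y)^2) y := by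
    intro y hy
    have h1 : HasDerivAt (fun y : ℝ => x - y) (-1) y := by
      simpa using (hasDerivAt_id y).const_sub x
    have := h1.inv (hne y hy)
    refine this.congr_deriv ?_
    ring
  have hcont : IntervalIntegrable (fun y => 1 / (x - y)^2) MeasureTheory.volume k (k+1) := by
    apply ContinuousOn.intervalIntegrable
    apply ContinuousOn.div continuousOn_const
    · exact ((continuousOn_const.sub continuousOn_id).pow 2)
    · intro y hy; exact pow_ne_zero 2 (hne y hy)
  rw [intervalIntegral.integral_eq_sub_of_hasDerivAt hderiv hcont]
  simp [one_div]

lemma Fval (k : ℝ) (hk : 1 ≤ k) :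
    (∫ x in (-1:ℝ)..0, ∫ y in k..(k+1), 1 / (x - y)^2)
      = (Real.log (k+1) - Real.log k) - (Real.log (k+2) - Real.log (k+1)) := by
  have hcongr : ∀ x ∈ Set.uIcc (-1:ℝ) 0,
      (∫ y in k..(k+1), 1 / (x - y)^2) = 1/(x-(k+1)) - 1/(x-k) := by
    intro x hx
    rw [Set.uIcc_of_le (by norm_num)] at hx
    exact inner_int x hx.2 k hk
  rw [intervalIntegral.integral_congr hcongr]
  have hne1 : ∀ x ∈ Set.uIcc (-1:ℝ) 0, k + 1 - x ≠ 0 := by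
    intro x hx; rw [Set.uIcc_of_le (by norm_num)] at hx
    have := hx.2; intro h; nlinarith [sub_eq_zero.mp h]
  have hne2 : ∀ x ∈ Set.uIcc (-1:ℝ) 0, k - x ≠ 0 := by
    intro x hx; rw [Set.uIcc_of_le (by norm_num)] at hx
    have := hx.2; intro h; nlinarith [sub_eq_zero.mp h]
  have hderiv : ∀ x ∈ Set.uIcc (-1:ℝ) 0,
      HasDerivAt (fun x => Real.log (k+1-x) - Real.log (k-x))
        (1/(x-(k+1)) - 1/(x-k)) x := by
    intro x hx
    have h1 : HasDerivAt (fun x : ℝ => k + 1 - x) (-1) x := by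
      simpa using (hasDerivAt_id x).const_sub (k+1)
    have h2 : HasDerivAt (fun x : ℝ => k - x) (-1) x := by
      simpa using (hasDerivAt_id x).const_sub k
    have l1 := h1.log (hne1 x hx)
    have l2 := h2.log (hne2 x hx)
    refine (l1.sub l2).congr_deriv ?_
    rw [Set.uIcc_of_le (by norm_num)] at hx
    have hk1 : k + 1 - x ≠ 0 := by intro h; nlinarith [sub_eq_zero.mp h, hx.2]
    have hk2 : k - x ≠ 0 := by intro h; nlinarith [sub_eq_zero.mp h, hx.2]
    have hk3 : x - (k + 1) ≠ 0 := by intro h; apply hk1; linarith [sub_eq_zero.mp h]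
    have hk4 : x - k ≠ 0 := by intro h; apply hk2; linarith [sub_eq_zero.mp h]
    field_simp
    ring
  have hcont : IntervalIntegrable (fun x => 1/(x-(k+1)) - 1/(x-k)) MeasureTheory.volume (-1) 0 := by
    apply ContinuousOn.intervalIntegrable
    apply ContinuousOn.sub
    · apply ContinuousOn.div continuousOn_const
        ((continuousOn_id.sub continuousOn_const))
      intro x hx h
      simp only [Pi.sub_apply, id_eq] at h
      exact hne1 x hx (by linarith [sub_eq_zero.mp h])
    · apply ContinuousOn.div continuousOn_const
        ((continuousOn_id.sub continuousOn_const))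
      intro x hx h
      simp only [Pi.sub_apply, id_eq] at h
      exact hne2 x hx (by linarith [sub_eq_zero.mp h])
  rw [intervalIntegral.integral_eq_sub_of_hasDerivAt hderiv hcont]
  norm_num
  ring

theorem stmt_19 :
    let F : ℕ → ℝ := fun k => ∫ x in (-1:ℝ)..0, ∫ y in (k:ℝ)..(k+1), 1 / (x - y)^2
    (∀ k : ℕ, 0 < k →
      F k = Real.log (((k:ℝ) + 1)^2 / ((k:ℝ) * (k + 2)))) ∧
    ∑' k : ℕ, F (k + 1) = Real.log 2 := by
  intro F
  have hF : ∀ k : ℕ, 0 < k → F k =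
      (Real.log ((k:ℝ)+1) - Real.log k) - (Real.log ((k:ℝ)+2) - Real.log ((k:ℝ)+1)) := by
    intro k hk
    exact Fval (k:ℝ) (by exact_mod_cast hk)
  constructor
  · intro k hk
    rw [hF k hk]
    have h0 : (0:ℝ) < k := by exact_mod_cast hk
    rw [Real.log_div (by positivity) (by positivity), Real.log_mul (by positivity) (by positivity),
      Real.log_pow]
    push_cast
    ring
  · -- telescoping sum
    set g : ℕ → ℝ := fun n => Real.log ((n:ℝ)+2) - Real.log ((n:ℝ)+1) with hg
    have hFg : ∀ n : ℕ, F (n+1) = g n - g (n+1) := by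
      intro n
      rw [hF (n+1) (Nat.succ_pos n)]
      simp only [hg]
      push_cast
      ring
    have hnonneg : ∀ n : ℕ, 0 ≤ F (n+1) := by
      intro n
      rw [hFg n]
      have key : Real.log (((n:ℝ)+3)/((n:ℝ)+2)) ≤ Real.log (((n:ℝ)+2)/((n:ℝ)+1)) := by
        apply Real.log_le_log (by positivity)
        rw [div_le_div_iff₀ (by positivity) (by positivity)]
        nlinarith
      rw [Real.log_div (by positivity) (by positivity),
        Real.log_div (by positivity) (by positivity)] at key
      simp only [hg]
      push_cast
      have e1 : ((n:ℝ)+1+2) = (n:ℝ)+3 := by ring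
      have e2 : ((n:ℝ)+1+1) = (n:ℝ)+2 := by ring
      rw [e1, e2]
      linarith
    have hgtend : Filter.Tendsto g Filter.atTop (nhds 0) := by
      have : ∀ n : ℕ, g n = Real.log (1 + 1/((n:ℝ)+1)) := by
        intro n
        simp only [hg]
        rw [← Real.log_div (by positivity) (by positivity)]
        congr 1
        field_simp
        ring
      rw [show g = fun n : ℕ => Real.log (1 + 1/((n:ℝ)+1)) from funext this]
      have h1 : Filter.Tendsto (fun n : ℕ => 1 + 1/((n:ℝ)+1)) Filter.atTop (nhds 1) := by
        have := tendsto_one_div_add_atTop_nhds_zero_nat (𝕜 := ℝ)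
        have h := this.const_add 1
        simpa using h
      have := (Real.continuousAt_log (by norm_num : (1:ℝ) ≠ 0)).tendsto.comp h1
      simpa [Function.comp_def] using this
    have hg0 : g 0 = Real.log 2 := by
      simp only [hg]
      norm_num
    have hsum : HasSum (fun n : ℕ => F (n+1)) (Real.log 2) := by
      rw [hasSum_iff_tendsto_nat_of_nonneg hnonneg]
      have hps : (fun n : ℕ => ∑ i ∈ Finset.range n, F (i+1)) = fun n => g 0 - g n := by
        funext n
        simp only [hFg]
        exact Finset.sum_range_sub' g n
      rw [hps, ← hg0]
      simpa using tendsto_const_nhds.sub hgtend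
    exact hsum.tsum_eq
end
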